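/- arXiv:1505.02038 — 2 statements merged into one kernel-verified Lean document; each statement's English description precedes it below -/
import Mathlib

section
/- Let R(u) = ρ u (u−u₂)(u−u₃) with ρ > 0 and 0 ≤ u₂ ≤ u₃, let κ ∈ ℝ and β > 0. Then there exists λ₀ > 0 such that for every λ ≥ λ₀, every g ∈ L^∞(0,T) with ‖g‖_{L^∞(0,T)} ≤ β, and every v ∈ L^∞(Q), one has ∫∫_Q [ e^{−λt} R(e^{λt} v(x,t)) + (λ + κ) v(x,t) − κ (K_λ(g)v)(x,t) ] · v(x,t) dx dt ≥ (λ/2) ‖v‖²_{L²(Q)}. -/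
open MeasureTheory Set Function
open scoped ENNReal


lemma exp_int_le_left {lam a b : ℝ} (hlam : 0 < lam) (hab : a ≤ b) :
    ∫ x in Ioo a b, Real.exp (-(lam * (b - x))) ≤ 1 / lam := by
  have hF : ∀ x ∈ uIcc a b, HasDerivAt (fun x => Real.exp (-(lam * (b - x))) / lam)
      (Real.exp (-(lam * (b - x)))) x := by
    intro x _
    have h1 : HasDerivAt (fun x : ℝ => -(lam * (b - x))) lam x := by
      simpa [Pi.neg_def] using (((hasDerivAt_id x).const_sub b).const_mul lam).neg
    have := (h1.exp).div_const lam
    rw [mul_div_cancel_right₀ _ hlam.ne'] at this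
    exact this
  have hint : IntervalIntegrable (fun x => Real.exp (-(lam * (b - x)))) volume a b := by
    apply Continuous.intervalIntegrable; continuity
  have hcalc : ∫ x in a..b, Real.exp (-(lam * (b - x)))
      = Real.exp (-(lam * (b - b))) / lam - Real.exp (-(lam * (b - a))) / lam :=
    intervalIntegral.integral_eq_sub_of_hasDerivAt hF hint
  rw [← MeasureTheory.integral_Ioc_eq_integral_Ioo, ← intervalIntegral.integral_of_le hab]
  rw [hcalc]
  simp only [sub_self, mul_zero, neg_zero, Real.exp_zero]
  have : 0 < Real.exp (-(lam * (b - a))) := Real.exp_pos _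
  rw [div_sub_div_same]
  gcongr
  linarith

lemma exp_int_le_right {lam a b : ℝ} (hlam : 0 < lam) (hab : a ≤ b) :
    ∫ x in Ioo a b, Real.exp (-(lam * (x - a))) ≤ 1 / lam := by
  have hF : ∀ x ∈ uIcc a b, HasDerivAt (fun x => -(Real.exp (-(lam * (x - a))) / lam))
      (Real.exp (-(lam * (x - a)))) x := by
    intro x _
    have h1 : HasDerivAt (fun x : ℝ => -(lam * (x - a))) (-lam) x := by
      simpa [Pi.neg_def] using (((hasDerivAt_id x).sub_const a).const_mul lam).neg
    have := ((h1.exp).div_const lam).neg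
    rw [mul_neg, neg_div, neg_neg, mul_div_cancel_right₀ _ hlam.ne'] at this
    exact this
  have hint : IntervalIntegrable (fun x => Real.exp (-(lam * (x - a)))) volume a b := by
    apply Continuous.intervalIntegrable; continuity
  have hcalc : ∫ x in a..b, Real.exp (-(lam * (x - a)))
      = -(Real.exp (-(lam * (b - a))) / lam) - -(Real.exp (-(lam * (a - a))) / lam) :=
    intervalIntegral.integral_eq_sub_of_hasDerivAt hF hint
  rw [← MeasureTheory.integral_Ioc_eq_integral_Ioo, ← intervalIntegral.integral_of_le hab]
  rw [hcalc]
  simp only [sub_self, mul_zero, neg_zero, Real.exp_zero]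
  have h2 : 0 < Real.exp (-(lam * (b - a))) := Real.exp_pos _
  have h3 : 0 ≤ Real.exp (-(lam * (b - a))) / lam := div_nonneg h2.le hlam.le
  linarith

lemma quad_bound (ρ u₂ u₃ x w : ℝ) (hρ : 0 < ρ) :
    -(ρ * (u₃ - u₂)^2/4) * w^2 ≤ Real.exp (-x) *
      (ρ * (Real.exp x * w) * (Real.exp x * w - u₂) * (Real.exp x * w - u₃)) * w := by
  have h1 : Real.exp (-x) * Real.exp x = 1 := by rw [← Real.exp_add]; simp
  have key : Real.exp (-x) * (ρ * (Real.exp x * w) * (Real.exp x * w - u₂) *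
      (Real.exp x * w - u₃)) * w
      = ρ * w^2 * ((Real.exp x * w - u₂) * (Real.exp x * w - u₃)) := by
    linear_combination (ρ * w^2 * (Real.exp x * w - u₂) * (Real.exp x * w - u₃)) * h1
  rw [key]
  nlinarith [mul_nonneg (mul_nonneg hρ.le (sq_nonneg w))
    (sq_nonneg (2*(Real.exp x * w) - u₂ - u₃))]

lemma fubini_tri {T lam M : ℝ} (hT : 0 < T) (hlam : 0 < lam)
    (f : ℝ → ℝ) (hf : Measurable f) (hf0 : ∀ s, 0 ≤ f s) (hfM : ∀ s, f s ≤ M) :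
    (∫ t in Ioo (0:ℝ) T, ∫ s in Ioo (0:ℝ) T,
        indicator (Ioo (0:ℝ) t) (fun s => Real.exp (-(lam*(t-s))) * f s) s)
      ≤ (1/lam) * ∫ s in Ioo (0:ℝ) T, f s := by
  have hM0 : 0 ≤ M := le_trans (hf0 0) (hfM 0)
  set μ : Measure ℝ := volume.restrict (Ioo (0:ℝ) T) with hμ
  haveI : IsFiniteMeasure μ := by
    constructor
    rw [hμ, Measure.restrict_apply_univ, Real.volume_Ioo]
    exact ENNReal.ofReal_lt_top
  set H : ℝ → ℝ → ℝ :=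
    fun t s => indicator (Ioo (0:ℝ) t) (fun s => Real.exp (-(lam*(t-s))) * f s) s with hH
  have hset : MeasurableSet {p : ℝ × ℝ | p.2 ∈ Ioo 0 p.1} := by
    have : {p : ℝ × ℝ | p.2 ∈ Ioo 0 p.1}
        = {p : ℝ × ℝ | (0:ℝ) < p.2} ∩ {p : ℝ × ℝ | p.2 < p.1} := by
      ext p; simp [mem_Ioo]
    rw [this]
    exact (measurableSet_lt measurable_const measurable_snd).inter
      (measurableSet_lt measurable_snd measurable_fst)
  have hmeas : Measurable (uncurry H) := by
    have heq : uncurry H = Set.indicator {p : ℝ × ℝ | p.2 ∈ Ioo 0 p.1}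
        (fun p => Real.exp (-(lam*(p.1-p.2))) * f p.2) := by
      funext p
      simp only [uncurry, hH, indicator_apply, mem_setOf_eq]
    rw [heq]
    exact Measurable.indicator
      (((measurable_fst.sub measurable_snd).const_mul lam).neg.exp.mul
        (hf.comp measurable_snd)) hset
  have hbdd : ∀ p : ℝ × ℝ, ‖uncurry H p‖ ≤ M := by
    intro ⟨t, s⟩
    simp only [uncurry, hH, indicator_apply]
    split
    · next h =>
      rw [Real.norm_eq_abs, abs_of_nonneg (mul_nonneg (Real.exp_nonneg _) (hf0 s))]
      have he : Real.exp (-(lam*(t-s))) ≤ 1 := by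
        rw [Real.exp_le_one_iff]
        have := h.2
        nlinarith
      nlinarith [hf0 s, hfM s]
    · simpa using hM0
  have hInt : Integrable (uncurry H) (μ.prod μ) :=
    (integrable_const M).mono' hmeas.aestronglyMeasurable (ae_of_all _ hbdd)
  have hswap : (∫ t, ∫ s, H t s ∂μ ∂μ) = ∫ s, ∫ t, H t s ∂μ ∂μ :=
    integral_integral_swap hInt
  rw [hswap]
  have hfint : Integrable f μ := by
    refine (integrable_const M).mono' hf.aestronglyMeasurable (ae_of_all _ ?_)
    intro s; rw [Real.norm_eq_abs, abs_of_nonneg (hf0 s)]; exact hfM s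
  have key : ∀ s ∈ Ioo (0:ℝ) T, (∫ t, H t s ∂μ) ≤ (1/lam) * f s := by
    intro s hs
    have e1 : EqOn (fun t => H t s)
        (fun t => indicator (Ioi s) (fun t => Real.exp (-(lam*(t-s))) * f s) t)
        (Ioo (0:ℝ) T) := by
      intro t _
      simp only [hH, indicator_apply, mem_Ioo, mem_Ioi]
      by_cases h : s < t
      · simp [hs.1, h]
      · simp [h]
    rw [hμ]
    rw [setIntegral_congr_fun measurableSet_Ioo e1]
    rw [integral_indicator measurableSet_Ioi]
    rw [Measure.restrict_restrict measurableSet_Ioi]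
    have hIeq : Ioi s ∩ Ioo (0:ℝ) T = Ioo s T := by
      ext x
      simp only [mem_inter_iff, mem_Ioi, mem_Ioo]
      exact ⟨fun ⟨h1, _, h3⟩ => ⟨h1, h3⟩, fun ⟨h1, h2⟩ => ⟨h1, lt_trans hs.1 h1, h2⟩⟩
    rw [hIeq, integral_mul_const]
    exact mul_le_mul_of_nonneg_right (exp_int_le_right hlam hs.2.le) (hf0 s)
  have hint1 : IntegrableOn (fun s => ∫ t, H t s ∂μ) (Ioo (0:ℝ) T) volume := by
    have := hInt.swap.integral_prod_left
    have h' : Integrable (fun s => ∫ t, H t s ∂μ) μ := by simpa [uncurry] using this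
    exact h'
  have hint2 : IntegrableOn (fun s => (1/lam) * f s) (Ioo (0:ℝ) T) volume :=
    hfint.const_mul _
  calc (∫ s, ∫ t, H t s ∂μ ∂μ) ≤ ∫ s in Ioo (0:ℝ) T, (1/lam) * f s :=
        setIntegral_mono_on hint1 hint2 measurableSet_Ioo key
    _ = (1/lam) * ∫ s in Ioo (0:ℝ) T, f s := integral_const_mul _ _

lemma abs_comb_le {a b c wq B1 B2 B3 M : ℝ} (ha : |a| ≤ B1) (hb : |b| ≤ B2)
    (hc : |c| ≤ B3) (hw : |wq| ≤ M) : |(a + b - c) * wq| ≤ (B1 + B2 + B3) * M := by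
  have h1 : 0 ≤ B1 := le_trans (abs_nonneg a) ha
  have h2 : 0 ≤ B2 := le_trans (abs_nonneg b) hb
  have h3 : 0 ≤ B3 := le_trans (abs_nonneg c) hc
  rw [abs_mul]
  apply mul_le_mul _ hw (abs_nonneg _) (by linarith)
  calc |a + b - c| ≤ |a + b| + |c| := abs_sub _ _
    _ ≤ |a| + |b| + |c| := by linarith [abs_add_le a b]
    _ ≤ B1 + B2 + B3 := by linarith

set_option maxHeartbeats 2000000 in
lemma core_ineq {N : ℕ} (T : ℝ) (hT : 0 < T)
    (Ω : Set (Fin N → ℝ)) (hΩm : MeasurableSet Ω) (hΩb : Bornology.IsBounded Ω)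
    (ρ u₂ u₃ κ β M : ℝ) (hρ : 0 < ρ) (hβ : 0 < β) (hM : 0 ≤ M)
    (lam : ℝ) (hlam : 1 + 2*(ρ*(u₃-u₂)^2/4 + |κ| + |κ| * β) ≤ lam)
    (G : ℝ → ℝ) (hGmeas : Measurable G) (hGb : ∀ t, |G t| ≤ β)
    (w : (Fin N → ℝ) × ℝ → ℝ) (hwmeas : Measurable w) (hwb : ∀ q, |w q| ≤ M) :
    (∫ q in Ω ×ˢ Ioo (0:ℝ) T,
        (Real.exp (-(lam * q.2)) *
            (ρ * (Real.exp (lam * q.2) * w q) *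
              (Real.exp (lam * q.2) * w q - u₂) *
              (Real.exp (lam * q.2) * w q - u₃)) +
          (lam + κ) * w q -
          κ * ∫ s in Ioo (0:ℝ) q.2,
            Real.exp (-(lam * (q.2 - s))) * G (q.2 - s) * w (q.1, s)) * w q) ≥
      lam / 2 * ∫ q in Ω ×ˢ Ioo (0:ℝ) T, (w q) ^ 2 := by
  have hC₁ : 0 ≤ ρ * (u₃-u₂)^2/4 := by positivity
  have hκβ : 0 ≤ |κ| * β := by positivity
  have hlam1 : 1 ≤ lam := by nlinarith
  have hlam0 : 0 < lam := lt_of_lt_of_le one_pos hlam1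
  set C₁ : ℝ := ρ * (u₃-u₂)^2/4 with hC₁def
  set μT : Measure ℝ := volume.restrict (Ioo (0:ℝ) T) with hμT
  set μΩ : Measure (Fin N → ℝ) := volume.restrict Ω with hμΩ
  set Q : Set ((Fin N → ℝ) × ℝ) := Ω ×ˢ Ioo (0:ℝ) T with hQ
  have hQm : MeasurableSet Q := hΩm.prod measurableSet_Ioo
  set μQ : Measure ((Fin N → ℝ) × ℝ) := volume.restrict Q with hμQ
  haveI hμTfin : IsFiniteMeasure μT := by
    constructor
    rw [hμT, Measure.restrict_apply_univ, Real.volume_Ioo]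
    exact ENNReal.ofReal_lt_top
  haveI hμΩfin : IsFiniteMeasure μΩ := by
    constructor
    rw [hμΩ, Measure.restrict_apply_univ]
    exact hΩb.measure_lt_top
  have hprod : μQ = μΩ.prod μT := by
    rw [hμQ, hμΩ, hμT, Measure.prod_restrict, hQ, ← Measure.volume_eq_prod]
  haveI hμQfin : IsFiniteMeasure μQ := by rw [hprod]; infer_instance
  have hμTtop : (μT univ).toReal = T := by
    rw [hμT, Measure.restrict_apply_univ, Real.volume_Ioo]
    simp [ENNReal.toReal_ofReal hT.le]
  -- region
  set Rg : Set (((Fin N → ℝ) × ℝ) × ℝ) := {p : ((Fin N → ℝ) × ℝ) × ℝ | p.2 ∈ Ioo 0 p.1.2} with hRg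
  have hRgm : MeasurableSet Rg := by
    have : Rg = {p : ((Fin N → ℝ) × ℝ) × ℝ | (0:ℝ) < p.2} ∩ {p : ((Fin N → ℝ) × ℝ) × ℝ | p.2 < p.1.2} := by
      ext p; simp [hRg, mem_Ioo]
    rw [this]
    exact (measurableSet_lt measurable_const measurable_snd).inter
      (measurableSet_lt measurable_snd measurable_fst.snd)
  -- kernels
  set KK : ((Fin N → ℝ) × ℝ) × ℝ → ℝ := Rg.indicator
    (fun p => Real.exp (-(lam*(p.1.2-p.2))) * G (p.1.2-p.2) * w (p.1.1, p.2)) with hKK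
  set Kin : (Fin N → ℝ) × ℝ → ℝ := fun q => ∫ s, KK (q, s) ∂μT with hKin
  set PP : ((Fin N → ℝ) × ℝ) × ℝ → ℝ := Rg.indicator
    (fun p => Real.exp (-(lam*(p.1.2-p.2))) * (((w (p.1.1, p.2))^2 + (w p.1)^2)/2)) with hPP
  set ψ : (Fin N → ℝ) × ℝ → ℝ := fun q => ∫ s, PP (q, s) ∂μT with hψ
  have hKKmeas : Measurable KK := by
    apply Measurable.indicator _ hRgm
    exact (((measurable_fst.snd.sub measurable_snd).const_mul lam).neg.exp.mul
      (hGmeas.comp (measurable_fst.snd.sub measurable_snd))).mul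
      (hwmeas.comp (measurable_fst.fst.prodMk measurable_snd))
  have hPPmeas : Measurable PP := by
    apply Measurable.indicator _ hRgm
    exact ((measurable_fst.snd.sub measurable_snd).const_mul lam).neg.exp.mul
      ((((hwmeas.comp (measurable_fst.fst.prodMk measurable_snd)).pow_const 2).add
        ((hwmeas.comp measurable_fst).pow_const 2)).div_const 2)
  have hKKb : ∀ p, |KK p| ≤ β * M := by
    intro p
    rw [hKK]
    rcases (em (p ∈ Rg)) with h | h
    · rw [indicator_of_mem h]
      have hp := h
      rw [hRg, mem_setOf_eq, mem_Ioo] at hp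
      have he : Real.exp (-(lam*(p.1.2-p.2))) ≤ 1 := by
        rw [Real.exp_le_one_iff]; nlinarith [hp.2]
      have he0 : (0:ℝ) ≤ Real.exp (-(lam*(p.1.2-p.2))) := Real.exp_nonneg _
      rw [abs_mul, abs_mul, abs_of_nonneg he0]
      calc Real.exp (-(lam*(p.1.2-p.2))) * |G (p.1.2-p.2)| * |w (p.1.1, p.2)|
          ≤ 1 * β * M := by
            apply mul_le_mul _ (hwb _) (abs_nonneg _) (by positivity)
            exact mul_le_mul he (hGb _) (abs_nonneg _) one_pos.le
        _ = β * M := by ring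
    · rw [indicator_of_notMem h, abs_zero]; positivity
  have hPPb : ∀ p, |PP p| ≤ M^2 := by
    intro p
    rw [hPP]
    rcases (em (p ∈ Rg)) with h | h
    · rw [indicator_of_mem h]
      have hp := h
      rw [hRg, mem_setOf_eq, mem_Ioo] at hp
      have he : Real.exp (-(lam*(p.1.2-p.2))) ≤ 1 := by
        rw [Real.exp_le_one_iff]; nlinarith [hp.2]
      have he0 : (0:ℝ) ≤ Real.exp (-(lam*(p.1.2-p.2))) := Real.exp_nonneg _
      have h1 : |w (p.1.1, p.2)| ≤ M := hwb _
      have h2 : |w p.1| ≤ M := hwb _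
      rw [abs_mul, abs_of_nonneg he0]
      have hq : |((w (p.1.1, p.2))^2 + (w p.1)^2)/2| ≤ M^2 := by
        rw [abs_of_nonneg (by positivity)]
        nlinarith [sq_abs (w (p.1.1, p.2)), sq_abs (w p.1), abs_nonneg (w (p.1.1,p.2)), abs_nonneg (w p.1)]
      nlinarith [abs_nonneg (((w (p.1.1, p.2))^2 + (w p.1)^2)/2)]
    · rw [indicator_of_notMem h, abs_zero]; positivity
  have hPP0 : ∀ p, 0 ≤ PP p := by
    intro p
    rw [hPP]
    apply indicator_nonneg
    intro p _
    positivity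
  have hKinmeas : Measurable Kin := by
    rw [hKin]
    exact (hKKmeas.stronglyMeasurable.integral_prod_right').measurable
  have hψmeas : Measurable ψ := by
    rw [hψ]
    exact (hPPmeas.stronglyMeasurable.integral_prod_right').measurable
  have hKinb : ∀ q, |Kin q| ≤ β * M * T := by
    intro q
    rw [hKin]
    have h := norm_integral_le_of_norm_le_const (μ := μT) (C := β * M)
      (ae_of_all _ (fun s => by rw [Real.norm_eq_abs]; exact hKKb (q, s)))
    rwa [Real.norm_eq_abs, measureReal_def, hμTtop] at h
  have hψb : ∀ q, |ψ q| ≤ M^2 * T := by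
    intro q
    rw [hψ]
    have h := norm_integral_le_of_norm_le_const (μ := μT) (C := M^2)
      (ae_of_all _ (fun s => by rw [Real.norm_eq_abs]; exact hPPb (q, s)))
    rwa [Real.norm_eq_abs, measureReal_def, hμTtop] at h
  -- generic integrability helpers
  have hbQ : ∀ (f : (Fin N → ℝ) × ℝ → ℝ) (C : ℝ), Measurable f →
      (∀ᵐ q ∂μQ, |f q| ≤ C) → Integrable f μQ := by
    intro f C hf hC
    exact (integrable_const C).mono' hf.aestronglyMeasurable
      (hC.mono fun q h => by rwa [Real.norm_eq_abs])
  have hbT : ∀ (f : ℝ → ℝ) (C : ℝ), Measurable f → (∀ s, |f s| ≤ C) → Integrable f μT := by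
    intro f C hf hC
    exact (integrable_const C).mono' hf.aestronglyMeasurable
      (ae_of_all _ fun s => by rw [Real.norm_eq_abs]; exact hC s)
  -- identification of the inner integral with Kin
  have hKeq : ∀ q : (Fin N → ℝ) × ℝ, q.2 ∈ Ioo (0:ℝ) T →
      (∫ s in Ioo (0:ℝ) q.2,
        Real.exp (-(lam * (q.2 - s))) * G (q.2 - s) * w (q.1, s)) = Kin q := by
    intro q hq
    have h1 : (fun s => KK (q, s)) = (Ioo (0:ℝ) q.2).indicator
        (fun s => Real.exp (-(lam * (q.2 - s))) * G (q.2 - s) * w (q.1, s)) := by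
      funext s
      rw [hKK]
      by_cases h : s ∈ Ioo (0:ℝ) q.2
      · rw [indicator_of_mem (show ((q,s) ∈ Rg) from h) _, indicator_of_mem h]
      · rw [indicator_of_notMem (show ¬((q,s) ∈ Rg) from h) _, indicator_of_notMem h]
    have h2 : Ioo (0:ℝ) q.2 ∩ Ioo (0:ℝ) T = Ioo (0:ℝ) q.2 :=
      inter_eq_left.mpr (Ioo_subset_Ioo le_rfl hq.2.le)
    show (∫ s in Ioo (0:ℝ) q.2,
        Real.exp (-(lam * (q.2 - s))) * G (q.2 - s) * w (q.1, s)) = ∫ s, KK (q, s) ∂μT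
    rw [h1, integral_indicator measurableSet_Ioo, hμT,
      Measure.restrict_restrict measurableSet_Ioo, h2]
  -- the integrand F
  set F : (Fin N → ℝ) × ℝ → ℝ := fun q =>
    (Real.exp (-(lam * q.2)) *
        (ρ * (Real.exp (lam * q.2) * w q) *
          (Real.exp (lam * q.2) * w q - u₂) *
          (Real.exp (lam * q.2) * w q - u₃)) +
      (lam + κ) * w q - κ * Kin q) * w q with hF
  have hgoalL : (∫ q, ((Real.exp (-(lam * q.2)) *
        (ρ * (Real.exp (lam * q.2) * w q) *
          (Real.exp (lam * q.2) * w q - u₂) *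
          (Real.exp (lam * q.2) * w q - u₃)) +
      (lam + κ) * w q -
      κ * ∫ s in Ioo (0:ℝ) q.2,
        Real.exp (-(lam * (q.2 - s))) * G (q.2 - s) * w (q.1, s)) * w q) ∂μQ)
      = ∫ q, F q ∂μQ := by
    rw [hμQ]
    apply setIntegral_congr_fun hQm
    intro q hq
    simp only [hF]
    rw [hKeq q hq.2]
  rw [hgoalL]
  -- measurability of F
  have he2 : Measurable fun q : (Fin N → ℝ) × ℝ => Real.exp (lam * q.2) :=
    (measurable_snd.const_mul lam).exp
  have hy : Measurable fun q : (Fin N → ℝ) × ℝ => Real.exp (lam * q.2) * w q := he2.mul hwmeas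
  have hFmeas : Measurable F := by
    rw [hF]
    exact ((((((measurable_snd.const_mul lam).neg).exp).mul
      (((hy.const_mul ρ).mul (hy.sub_const u₂)).mul (hy.sub_const u₃))).add
      (hwmeas.const_mul (lam + κ))).sub (hKinmeas.const_mul κ)).mul hwmeas
  -- bound for F on Q
  set E : ℝ := Real.exp (lam * T) with hE
  have hE0 : 0 ≤ E := Real.exp_nonneg _
  have hEM0 : 0 ≤ E * M := by positivity
  set B1 : ℝ := ρ * (E*M) * (E*M + |u₂|) * (E*M + |u₃|) with hB1
  set CF : ℝ := (B1 + (lam + |κ|)*M + |κ| * (β*M*T)) * M with hCF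
  have hFb : ∀ᵐ q ∂μQ, |F q| ≤ CF := by
    rw [hμQ]
    filter_upwards [ae_restrict_mem hQm] with q hq
    have ht : q.2 ∈ Ioo (0:ℝ) T := hq.2
    have hy1 : |Real.exp (lam * q.2) * w q| ≤ E * M := by
      rw [abs_mul, abs_of_nonneg (Real.exp_nonneg _)]
      apply mul_le_mul _ (hwb q) (abs_nonneg _) hE0
      rw [hE]
      exact Real.exp_le_exp.mpr (by nlinarith [ht.2])
    have hyA : |Real.exp (lam * q.2) * w q - u₂| ≤ E*M + |u₂| :=
      (abs_sub _ _).trans (add_le_add hy1 le_rfl)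
    have hyB : |Real.exp (lam * q.2) * w q - u₃| ≤ E*M + |u₃| :=
      (abs_sub _ _).trans (add_le_add hy1 le_rfl)
    have hA : |Real.exp (-(lam * q.2)) *
        (ρ * (Real.exp (lam * q.2) * w q) *
          (Real.exp (lam * q.2) * w q - u₂) *
          (Real.exp (lam * q.2) * w q - u₃))| ≤ B1 := by
      rw [abs_mul, abs_of_nonneg (Real.exp_nonneg _)]
      have hrest : |ρ * (Real.exp (lam * q.2) * w q) *
          (Real.exp (lam * q.2) * w q - u₂) *
          (Real.exp (lam * q.2) * w q - u₃)| ≤ B1 := by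
        rw [abs_mul, abs_mul, abs_mul, abs_of_pos hρ, hB1]
        have n1 : 0 ≤ E*M + |u₂| := add_nonneg hEM0 (abs_nonneg _)
        have n2 : 0 ≤ E*M + |u₃| := add_nonneg hEM0 (abs_nonneg _)
        exact mul_le_mul (mul_le_mul (mul_le_mul_of_nonneg_left hy1 hρ.le) hyA
          (abs_nonneg _) (mul_nonneg hρ.le hEM0)) hyB (abs_nonneg _)
          (mul_nonneg (mul_nonneg hρ.le hEM0) n1)
      have he1 : Real.exp (-(lam * q.2)) ≤ 1 :=
        Real.exp_le_one_iff.mpr (by nlinarith [ht.1])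
      calc Real.exp (-(lam * q.2)) * |ρ * (Real.exp (lam * q.2) * w q) *
          (Real.exp (lam * q.2) * w q - u₂) *
          (Real.exp (lam * q.2) * w q - u₃)| ≤ 1 * B1 :=
            mul_le_mul he1 hrest (abs_nonneg _) one_pos.le
        _ = B1 := one_mul _
    have hB : |(lam + κ) * w q| ≤ (lam + |κ|) * M := by
      rw [abs_mul]
      apply mul_le_mul _ (hwb q) (abs_nonneg _) (by positivity)
      calc |lam + κ| ≤ |lam| + |κ| := abs_add_le _ _
        _ = lam + |κ| := by rw [abs_of_pos hlam0]
    have hC : |κ * Kin q| ≤ |κ| * (β*M*T) := by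
      rw [abs_mul]
      exact mul_le_mul_of_nonneg_left (hKinb q) (abs_nonneg κ)
    simp only [hF, hCF]
    exact abs_comb_le hA hB hC (hwb q)
  have hFint : Integrable F μQ := hbQ F CF hFmeas hFb
  -- basic integrables
  have hw2b : ∀ q : (Fin N → ℝ) × ℝ, |(w q)^2| ≤ M^2 := by
    intro q
    rw [abs_of_nonneg (sq_nonneg _)]
    nlinarith [hwb q, abs_nonneg (w q), sq_abs (w q)]
  have hw2int : Integrable (fun q => (w q)^2) μQ :=
    hbQ _ (M^2) (hwmeas.pow_const 2) (ae_of_all _ hw2b)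
  have hψint : Integrable ψ μQ := hbQ ψ (M^2*T) hψmeas (ae_of_all _ hψb)
  -- φ
  set φ : (Fin N → ℝ) × ℝ → ℝ := fun q => (lam + κ - C₁) * (w q)^2 - |κ| * β * ψ q with hφ
  have hφint : Integrable φ μQ := (hw2int.const_mul _).sub (hψint.const_mul _)
  -- pointwise bound φ ≤ F on Q
  have hpt : ∀ q ∈ Q, φ q ≤ F q := by
    intro q hq
    have h1 := quad_bound ρ u₂ u₃ (lam * q.2) (w q) hρ
    have hKwq : |Kin q * w q| ≤ β * ψ q := by
      have e1 : Kin q * w q = ∫ s, KK (q,s) * w q ∂μT := by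
        rw [hKin]; exact (integral_mul_const _ _).symm
      have hptw : ∀ s, |KK (q,s) * w q| ≤ β * PP (q,s) := by
        intro s
        by_cases h : (q, s) ∈ Rg
        · rw [hKK, hPP, indicator_of_mem h, indicator_of_mem h]
          have he0 : (0:ℝ) ≤ Real.exp (-(lam*(q.2-s))) := Real.exp_nonneg _
          rw [abs_mul, abs_mul, abs_mul, abs_of_nonneg he0]
          have hs2 : |w (q.1, s)| * |w q| ≤ ((w (q.1,s))^2 + (w q)^2)/2 := by
            nlinarith [sq_nonneg (|w (q.1,s)| - |w q|), sq_abs (w (q.1,s)), sq_abs (w q)]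
          calc Real.exp (-(lam*(q.2-s))) * |G (q.2-s)| * |w (q.1, s)| * |w q|
              = Real.exp (-(lam*(q.2-s))) * |G (q.2-s)| * (|w (q.1, s)| * |w q|) := by ring
            _ ≤ Real.exp (-(lam*(q.2-s))) * β * (((w (q.1,s))^2 + (w q)^2)/2) := by
                apply mul_le_mul (mul_le_mul_of_nonneg_left (hGb _) he0) hs2
                  (by positivity) (by positivity)
            _ = β * (Real.exp (-(lam*(q.2-s))) * (((w (q.1,s))^2 + (w q)^2)/2)) := by ring
        · rw [hKK, hPP, indicator_of_notMem h, indicator_of_notMem h]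
          simp
      have hi1 : Integrable (fun s => |KK (q,s) * w q|) μT := by
        apply hbT _ (β*M*M)
        · exact ((hKKmeas.comp measurable_prodMk_left).mul_const (w q)).abs
        · intro s
          rw [abs_abs, abs_mul]
          apply mul_le_mul (hKKb (q,s)) (hwb q) (abs_nonneg _) (by positivity)
      have hi2 : Integrable (fun s => β * PP (q,s)) μT := by
        apply hbT _ (β*(M^2))
        · exact (hPPmeas.comp measurable_prodMk_left).const_mul β
        · intro s
          rw [abs_mul, abs_of_pos hβ]
          exact mul_le_mul_of_nonneg_left (hPPb (q,s)) hβ.le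
      calc |Kin q * w q| = |∫ s, KK (q,s) * w q ∂μT| := by rw [e1]
        _ ≤ ∫ s, |KK (q,s) * w q| ∂μT := by
            simpa only [Real.norm_eq_abs] using
              norm_integral_le_integral_norm (μ := μT) (fun s => KK (q,s) * w q)
        _ ≤ ∫ s, β * PP (q,s) ∂μT := integral_mono hi1 hi2 hptw
        _ = β * ψ q := by rw [hψ]; exact integral_const_mul _ _
    have h2 : κ * Kin q * w q ≤ |κ| * (β * ψ q) := by
      calc κ * Kin q * w q ≤ |κ * Kin q * w q| := le_abs_self _
        _ = |κ| * |Kin q * w q| := by rw [mul_assoc, abs_mul]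
        _ ≤ |κ| * (β * ψ q) := mul_le_mul_of_nonneg_left hKwq (abs_nonneg κ)
    have hFq : F q = Real.exp (-(lam * q.2)) *
        (ρ * (Real.exp (lam * q.2) * w q) *
          (Real.exp (lam * q.2) * w q - u₂) *
          (Real.exp (lam * q.2) * w q - u₃)) * w q
        + (lam + κ) * (w q)^2 - κ * Kin q * w q := by
      simp only [hF]; ring
    have hφq : φ q = (lam + κ - C₁) * (w q)^2 - |κ| * β * ψ q := by simp only [hφ]
    rw [hFq, hφq, hC₁def]
    nlinarith [h1, h2]
  have hFgeφ : ∫ q, φ q ∂μQ ≤ ∫ q, F q ∂μQ := by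
    rw [hμQ]
    exact setIntegral_mono_on hφint hFint hQm hpt
  -- J
  set J : ℝ := ∫ q, (w q)^2 ∂μQ with hJ
  have hJ0 : 0 ≤ J := by rw [hJ]; exact integral_nonneg (fun q => sq_nonneg _)
  have hφval : ∫ q, φ q ∂μQ = (lam + κ - C₁) * J - |κ| * β * ∫ q, ψ q ∂μQ := by
    calc ∫ q, φ q ∂μQ = ∫ q, ((lam + κ - C₁) * (w q)^2 - |κ| * β * ψ q) ∂μQ := rfl
      _ = (∫ q, (lam + κ - C₁) * (w q)^2 ∂μQ) - ∫ q, |κ| * β * ψ q ∂μQ :=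
          integral_sub (hw2int.const_mul _) (hψint.const_mul _)
      _ = (lam + κ - C₁) * J - |κ| * β * ∫ q, ψ q ∂μQ := by
          rw [integral_const_mul, integral_const_mul, hJ]
  -- split ψ
  set PP1 : ((Fin N → ℝ) × ℝ) × ℝ → ℝ := Rg.indicator
    (fun p => Real.exp (-(lam * (p.1.2 - p.2))) * ((w (p.1.1, p.2))^2/2)) with hPP1
  set PP2 : ((Fin N → ℝ) × ℝ) × ℝ → ℝ := Rg.indicator
    (fun p => Real.exp (-(lam * (p.1.2 - p.2))) * ((w p.1)^2/2)) with hPP2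
  have hPP1meas : Measurable PP1 := by
    apply Measurable.indicator _ hRgm
    exact ((measurable_fst.snd.sub measurable_snd).const_mul lam).neg.exp.mul
      (((hwmeas.comp (measurable_fst.fst.prodMk measurable_snd)).pow_const 2).div_const 2)
  have hPP2meas : Measurable PP2 := by
    apply Measurable.indicator _ hRgm
    exact ((measurable_fst.snd.sub measurable_snd).const_mul lam).neg.exp.mul
      (((hwmeas.comp measurable_fst).pow_const 2).div_const 2)
  have hPP1b : ∀ p, |PP1 p| ≤ M^2 := by
    intro p
    rw [hPP1]
    rcases em (p ∈ Rg) with h | h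
    · rw [indicator_of_mem h]
      have hp := h
      rw [hRg, mem_setOf_eq, mem_Ioo] at hp
      have he : Real.exp (-(lam*(p.1.2-p.2))) ≤ 1 :=
        Real.exp_le_one_iff.mpr (by nlinarith [hp.2])
      have he0 := Real.exp_nonneg (-(lam*(p.1.2-p.2)))
      rw [abs_mul, abs_of_nonneg he0]
      have habs : |(w (p.1.1,p.2))^2/2| ≤ M^2 := by
        rw [abs_of_nonneg (by positivity)]
        nlinarith [sq_abs (w (p.1.1,p.2)), abs_nonneg (w (p.1.1,p.2)), hwb (p.1.1,p.2)]
      nlinarith [abs_nonneg ((w (p.1.1,p.2))^2/2)]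
    · rw [indicator_of_notMem h, abs_zero]; positivity
  have hPP2b : ∀ p, |PP2 p| ≤ M^2 := by
    intro p
    rw [hPP2]
    rcases em (p ∈ Rg) with h | h
    · rw [indicator_of_mem h]
      have hp := h
      rw [hRg, mem_setOf_eq, mem_Ioo] at hp
      have he : Real.exp (-(lam*(p.1.2-p.2))) ≤ 1 :=
        Real.exp_le_one_iff.mpr (by nlinarith [hp.2])
      have he0 := Real.exp_nonneg (-(lam*(p.1.2-p.2)))
      rw [abs_mul, abs_of_nonneg he0]
      have habs : |(w p.1)^2/2| ≤ M^2 := by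
        rw [abs_of_nonneg (by positivity)]
        nlinarith [sq_abs (w p.1), abs_nonneg (w p.1), hwb p.1]
      nlinarith [abs_nonneg ((w p.1)^2/2)]
    · rw [indicator_of_notMem h, abs_zero]; positivity
  set A1 : (Fin N → ℝ) × ℝ → ℝ := fun q => ∫ s, PP1 (q, s) ∂μT with hA1
  set A2 : (Fin N → ℝ) × ℝ → ℝ := fun q => ∫ s, PP2 (q, s) ∂μT with hA2
  have hA1meas : Measurable A1 := by
    rw [hA1]; exact (hPP1meas.stronglyMeasurable.integral_prod_right').measurable
  have hA2meas : Measurable A2 := by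
    rw [hA2]; exact (hPP2meas.stronglyMeasurable.integral_prod_right').measurable
  have hA1b : ∀ q, |A1 q| ≤ M^2 * T := by
    intro q
    have h := norm_integral_le_of_norm_le_const (μ := μT) (C := M^2)
      (ae_of_all _ (fun s => by rw [Real.norm_eq_abs]; exact hPP1b (q, s)))
    rwa [Real.norm_eq_abs, measureReal_def, hμTtop] at h
  have hA2b : ∀ q, |A2 q| ≤ M^2 * T := by
    intro q
    have h := norm_integral_le_of_norm_le_const (μ := μT) (C := M^2)
      (ae_of_all _ (fun s => by rw [Real.norm_eq_abs]; exact hPP2b (q, s)))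
    rwa [Real.norm_eq_abs, measureReal_def, hμTtop] at h
  have hA1int : Integrable A1 μQ := hbQ A1 (M^2*T) hA1meas (ae_of_all _ hA1b)
  have hA2int : Integrable A2 μQ := hbQ A2 (M^2*T) hA2meas (ae_of_all _ hA2b)
  have hψsplit : ∀ q, ψ q = A1 q + A2 q := by
    intro q
    have hsum : ∀ s, PP (q,s) = PP1 (q,s) + PP2 (q,s) := by
      intro s
      by_cases h : (q,s) ∈ Rg
      · rw [hPP, hPP1, hPP2, indicator_of_mem h, indicator_of_mem h, indicator_of_mem h]
        ring
      · rw [hPP, hPP1, hPP2, indicator_of_notMem h, indicator_of_notMem h,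
          indicator_of_notMem h]
        ring
    calc ψ q = ∫ s, (PP1 (q,s) + PP2 (q,s)) ∂μT :=
          integral_congr_ae (ae_of_all _ hsum)
      _ = A1 q + A2 q := integral_add
          (hbT _ (M^2) (hPP1meas.comp measurable_prodMk_left) (fun s => hPP1b (q,s)))
          (hbT _ (M^2) (hPP2meas.comp measurable_prodMk_left) (fun s => hPP2b (q,s)))
  have hA2le : ∀ q ∈ Q, A2 q ≤ (1/lam) * ((w q)^2/2) := by
    intro q hq
    have ht : q.2 ∈ Ioo (0:ℝ) T := hq.2
    have h1 : (fun s => PP2 (q, s)) = fun s =>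
        (Ioo (0:ℝ) q.2).indicator (fun s => Real.exp (-(lam * (q.2 - s)))) s * ((w q)^2/2) := by
      funext s
      by_cases h : s ∈ Ioo (0:ℝ) q.2
      · rw [hPP2, indicator_of_mem (show ((q,s) ∈ Rg) from h),
          indicator_of_mem h]
      · rw [hPP2, indicator_of_notMem (show ¬((q,s) ∈ Rg) from h),
          indicator_of_notMem h, zero_mul]
    have h2 : A2 q = (∫ s, (Ioo (0:ℝ) q.2).indicator
        (fun s => Real.exp (-(lam * (q.2 - s)))) s ∂μT) * ((w q)^2/2) := by
      show (∫ s, PP2 (q,s) ∂μT) = _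
      rw [h1, integral_mul_const]
    have h3 : (∫ s, (Ioo (0:ℝ) q.2).indicator
        (fun s => Real.exp (-(lam * (q.2 - s)))) s ∂μT) ≤ 1/lam := by
      rw [integral_indicator measurableSet_Ioo, hμT,
        Measure.restrict_restrict measurableSet_Ioo,
        inter_eq_left.mpr (Ioo_subset_Ioo le_rfl ht.2.le)]
      exact exp_int_le_left hlam0 ht.1.le
    rw [h2]
    exact mul_le_mul_of_nonneg_right h3 (by positivity)
  have hA2tot : (∫ q, A2 q ∂μQ) ≤ (1/lam) * (J/2) := by
    calc (∫ q, A2 q ∂μQ) ≤ ∫ q, (1/lam) * ((w q)^2/2) ∂μQ := by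
          rw [hμQ]
          exact setIntegral_mono_on hA2int ((hw2int.div_const 2).const_mul _) hQm hA2le
      _ = (1/lam) * (J/2) := by rw [integral_const_mul, integral_div, ← hJ]
  have hA1tot : (∫ q, A1 q ∂μQ) ≤ (1/lam) * (J/2) := by
    have hA1prod : Integrable A1 (μΩ.prod μT) := hprod ▸ hA1int
    have hw2prod : Integrable (fun z : (Fin N → ℝ) × ℝ => (w z)^2/2) (μΩ.prod μT) :=
      hprod ▸ (hw2int.div_const 2)
    have hxle : ∀ x, (∫ t, A1 (x, t) ∂μT) ≤ (1/lam) * ∫ s, ((w (x,s))^2/2) ∂μT := by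
      intro x
      have hform : ∀ t, A1 (x, t) = ∫ s, (Ioo (0:ℝ) t).indicator
          (fun s => Real.exp (-(lam * (t - s))) * ((w (x,s))^2/2)) s ∂μT := by
        intro t
        show (∫ s, PP1 ((x,t), s) ∂μT) = _
        apply integral_congr_ae (ae_of_all _ ?_)
        intro s
        by_cases h : s ∈ Ioo (0:ℝ) t
        · rw [hPP1, indicator_of_mem (show (((x,t),s) ∈ Rg) from h), indicator_of_mem h]
        · rw [hPP1, indicator_of_notMem (show ¬(((x,t),s) ∈ Rg) from h),
            indicator_of_notMem h]
      calc (∫ t, A1 (x,t) ∂μT) = ∫ t in Ioo (0:ℝ) T, ∫ s in Ioo (0:ℝ) T,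
            (Ioo (0:ℝ) t).indicator
              (fun s => Real.exp (-(lam * (t - s))) * ((w (x,s))^2/2)) s := by
            rw [hμT]
            exact setIntegral_congr_fun measurableSet_Ioo (fun t _ => hform t)
        _ ≤ (1/lam) * ∫ s in Ioo (0:ℝ) T, ((w (x,s))^2/2) := by
            apply fubini_tri hT hlam0 (fun s => (w (x,s))^2/2)
            · exact ((hwmeas.comp measurable_prodMk_left).pow_const 2).div_const 2
            · intro s; positivity
            · intro s
              show (w (x,s))^2/2 ≤ M^2/2
              nlinarith [sq_abs (w (x,s)), abs_nonneg (w (x,s)), hwb (x,s)]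
        _ = (1/lam) * ∫ s, ((w (x,s))^2/2) ∂μT := by rw [hμT]
    have hI1 : Integrable (fun x => ∫ t, A1 (x,t) ∂μT) μΩ := hA1prod.integral_prod_left
    have hI2 : Integrable (fun x => ∫ s, ((w (x,s))^2/2) ∂μT) μΩ :=
      hw2prod.integral_prod_left
    calc (∫ q, A1 q ∂μQ) = ∫ x, (∫ t, A1 (x,t) ∂μT) ∂μΩ := by
          rw [hprod]; exact integral_prod _ hA1prod
      _ ≤ ∫ x, ((1/lam) * ∫ s, ((w (x,s))^2/2) ∂μT) ∂μΩ :=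
          integral_mono hI1 (hI2.const_mul _) hxle
      _ = (1/lam) * ∫ x, (∫ s, ((w (x,s))^2/2) ∂μT) ∂μΩ := integral_const_mul _ _
      _ = (1/lam) * ∫ z, ((w z)^2/2) ∂(μΩ.prod μT) := by rw [integral_prod _ hw2prod]
      _ = (1/lam) * (J/2) := by rw [← hprod, integral_div, ← hJ]
  have hSψ : (∫ q, ψ q ∂μQ) ≤ (1/lam) * J := by
    have hψeq : (∫ q, ψ q ∂μQ) = (∫ q, A1 q ∂μQ) + ∫ q, A2 q ∂μQ := by
      calc (∫ q, ψ q ∂μQ) = ∫ q, (A1 q + A2 q) ∂μQ :=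
            integral_congr_ae (ae_of_all _ hψsplit)
        _ = _ := integral_add hA1int hA2int
    rw [hψeq]
    have : (1/lam) * (J/2) + (1/lam) * (J/2) = (1/lam) * J := by ring
    linarith [hA1tot, hA2tot]
  have hmain : (lam + κ - C₁) * J - |κ| * β * ((1/lam) * J) ≤ ∫ q, F q ∂μQ := by
    have h5 : |κ| * β * (∫ q, ψ q ∂μQ) ≤ |κ| * β * ((1/lam) * J) :=
      mul_le_mul_of_nonneg_left hSψ hκβ
    have h6 := hφval ▸ hFgeφ
    linarith
  have hc : 0 ≤ lam + κ - C₁ - |κ| * β / lam - lam/2 := by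
    have hdiv : |κ| * β / lam ≤ |κ| * β := div_le_self hκβ hlam1
    have hnk : -|κ| ≤ κ := neg_abs_le κ
    linarith
  have hfin : lam/2 * J ≤ (lam + κ - C₁) * J - |κ| * β * ((1/lam) * J) := by
    have h6 : 0 ≤ (lam + κ - C₁ - |κ| * β / lam - lam/2) * J := mul_nonneg hc hJ0
    have h7 : |κ| * β * ((1/lam) * J) = (|κ| * β / lam) * J := by ring
    nlinarith [h6]
  linarith [hmain, hfin]



set_option maxHeartbeats 2000000 in
/-- Let `R(u) = ρ u (u-u₂)(u-u₃)` with `ρ > 0`, `0 ≤ u₂ ≤ u₃`, let `κ ∈ ℝ` and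
`β > 0`. Then there exists `λ₀ > 0` such that for every `λ ≥ λ₀`, every `g ∈ L^∞(0,T)` with
`‖g‖_{L^∞(0,T)} ≤ β`, and every `v ∈ L^∞(Q)`:
`∫∫_Q [e^{-λt} R(e^{λt}v) + (λ+κ)v - κ (K_λ(g)v)] v dxdt ≥ (λ/2) ‖v‖²_{L²(Q)}`,
where `(K_λ(g)v)(x,t) = ∫_0^t e^{-λ(t-s)} g(t-s) v(x,s) ds`. -/
theorem stmt_6 {N : ℕ} (hN : 1 ≤ N) (T : ℝ) (hT : 0 < T)
    (Ω : Set (Fin N → ℝ)) (hΩm : MeasurableSet Ω) (hΩb : Bornology.IsBounded Ω)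
    (ρ u₂ u₃ κ β : ℝ) (hρ : 0 < ρ) (h2 : 0 ≤ u₂) (h23 : u₂ ≤ u₃) (hβ : 0 < β) :
    ∃ lam₀ : ℝ, 0 < lam₀ ∧
      ∀ lam : ℝ, lam₀ ≤ lam →
        ∀ g : ℝ → ℝ, AEStronglyMeasurable g (volume.restrict (Ioo (0:ℝ) T)) →
          eLpNorm g ⊤ (volume.restrict (Ioo (0:ℝ) T)) ≤ ENNReal.ofReal β →
          ∀ v : (Fin N → ℝ) × ℝ → ℝ, MemLp v ⊤ (volume.restrict (Ω ×ˢ Ioo (0:ℝ) T)) →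
            (∫ q in Ω ×ˢ Ioo (0:ℝ) T,
                (Real.exp (-(lam * q.2)) *
                    (ρ * (Real.exp (lam * q.2) * v q) *
                      (Real.exp (lam * q.2) * v q - u₂) *
                      (Real.exp (lam * q.2) * v q - u₃)) +
                  (lam + κ) * v q -
                  κ * ∫ s in Ioo (0:ℝ) q.2,
                    Real.exp (-(lam * (q.2 - s))) * g (q.2 - s) * v (q.1, s)) * v q) ≥
              lam / 2 * ∫ q in Ω ×ˢ Ioo (0:ℝ) T, (v q) ^ 2 := by
  refine ⟨1 + 2*(ρ*(u₃-u₂)^2/4 + |κ| + |κ| * β), by positivity, ?_⟩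
  intro lam hlam g hgmeas hgnorm v hv
  have hQm : MeasurableSet (Ω ×ˢ Ioo (0:ℝ) T) := hΩm.prod measurableSet_Ioo
  set μT : Measure ℝ := volume.restrict (Ioo (0:ℝ) T) with hμT
  set μΩ : Measure (Fin N → ℝ) := volume.restrict Ω with hμΩ
  set μQ : Measure ((Fin N → ℝ) × ℝ) := volume.restrict (Ω ×ˢ Ioo (0:ℝ) T) with hμQ
  have hprod : μQ = μΩ.prod μT := by
    rw [hμQ, hμΩ, hμT, Measure.prod_restrict, ← Measure.volume_eq_prod]
  -- truncated representative of v
  set S : ℝ≥0∞ := eLpNormEssSup v μQ with hS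
  have hStop : S ≠ ⊤ := by
    have := hv.2
    rw [eLpNorm_exponent_top] at this
    exact this.ne
  set M : ℝ := max S.toReal 0 with hM
  have hM0 : 0 ≤ M := le_max_right _ _
  have hvM : ∀ᵐ q ∂μQ, |v q| ≤ M := by
    filter_upwards [ae_le_eLpNormEssSup (f := v) (μ := μQ)] with q hq
    have h1 : ‖v q‖₊.toReal ≤ S.toReal := by
      have := ENNReal.toReal_mono hStop hq
      simpa using this
    have h2 : (‖v q‖₊ : ℝ) = |v q| := by
      rw [coe_nnnorm, Real.norm_eq_abs]
    rw [hM]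
    calc |v q| = ‖v q‖₊.toReal := h2.symm
      _ ≤ S.toReal := h1
      _ ≤ max S.toReal 0 := le_max_left _ _
  have hvmk := hv.aestronglyMeasurable
  set w : (Fin N → ℝ) × ℝ → ℝ := fun q => if |hvmk.mk v q| ≤ M then hvmk.mk v q else 0
    with hw
  have hwmeas : Measurable w := by
    have hm := hvmk.stronglyMeasurable_mk.measurable
    exact Measurable.ite (measurableSet_le hm.abs measurable_const) hm measurable_const
  have hwb : ∀ q, |w q| ≤ M := by
    intro q
    simp only [hw]
    by_cases h : |hvmk.mk v q| ≤ M
    · rwa [if_pos h]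
    · rw [if_neg h, abs_zero]; exact hM0
  have hvw : v =ᵐ[μQ] w := by
    filter_upwards [hvmk.ae_eq_mk, hvM] with q h1 h2
    simp only [hw]
    rw [← h1, if_pos h2]
  -- truncated representative of g
  set G : ℝ → ℝ := fun t => if |hgmeas.mk g t| ≤ β then hgmeas.mk g t else 0 with hG
  have hGmeas : Measurable G := by
    have hm := hgmeas.stronglyMeasurable_mk.measurable
    exact Measurable.ite (measurableSet_le hm.abs measurable_const) hm measurable_const
  have hGb : ∀ t, |G t| ≤ β := by
    intro t
    simp only [hG]
    by_cases h : |hgmeas.mk g t| ≤ β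
    · rwa [if_pos h]
    · rw [if_neg h, abs_zero]; exact hβ.le
  have hgβ : ∀ᵐ t ∂μT, |g t| ≤ β := by
    have h0 : eLpNormEssSup g μT ≤ ENNReal.ofReal β := by
      rw [← eLpNorm_exponent_top]; exact hgnorm
    filter_upwards [ae_le_eLpNormEssSup (f := g) (μ := μT)] with t ht
    have h1 : (‖g t‖₊ : ℝ≥0∞) ≤ ENNReal.ofReal β := le_trans ht h0
    have h2 := ENNReal.toReal_mono ENNReal.ofReal_ne_top h1
    rw [ENNReal.toReal_ofReal hβ.le] at h2
    calc |g t| = ‖g t‖₊.toReal := by rw [coe_nnnorm, Real.norm_eq_abs]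
      _ ≤ β := by simpa using h2
  have hgG : g =ᵐ[μT] G := by
    filter_upwards [hgmeas.ae_eq_mk, hgβ] with t h1 h2
    simp only [hG]
    rw [← h1, if_pos h2]
  -- equality of the squared integrals
  have E2 : (∫ q in Ω ×ˢ Ioo (0:ℝ) T, (v q)^2) = ∫ q in Ω ×ˢ Ioo (0:ℝ) T, (w q)^2 :=
    integral_congr_ae (hvw.mono fun q h => by simp only [h])
  -- bad sets
  have hslice : ∀ᵐ x ∂μΩ, ∀ᵐ s ∂μT, v (x, s) = w (x, s) :=
    Measure.ae_ae_of_ae_prod (μ := μΩ) (ν := μT) (p := fun z => v z = w z)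
      (by rwa [← hprod])
  obtain ⟨Sx, hSx_sub, hSx_meas, hSx_null⟩ :=
    exists_measurable_superset_of_null (μ := μΩ)
      (s := {x | ¬ (∀ᵐ s ∂μT, v (x, s) = w (x, s))})
      (ae_iff.mp hslice)
  have hBad : μQ ({q | v q ≠ w q} ∪ Sx ×ˢ (univ : Set ℝ)) = 0 := by
    apply measure_union_null hvw
    rw [hprod, Measure.prod_prod, hSx_null, zero_mul]
  have E1 : (∫ q in Ω ×ˢ Ioo (0:ℝ) T,
        (Real.exp (-(lam * q.2)) *
            (ρ * (Real.exp (lam * q.2) * v q) *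
              (Real.exp (lam * q.2) * v q - u₂) *
              (Real.exp (lam * q.2) * v q - u₃)) +
          (lam + κ) * v q -
          κ * ∫ s in Ioo (0:ℝ) q.2,
            Real.exp (-(lam * (q.2 - s))) * g (q.2 - s) * v (q.1, s)) * v q)
      = ∫ q in Ω ×ˢ Ioo (0:ℝ) T,
        (Real.exp (-(lam * q.2)) *
            (ρ * (Real.exp (lam * q.2) * w q) *
              (Real.exp (lam * q.2) * w q - u₂) *
              (Real.exp (lam * q.2) * w q - u₃)) +
          (lam + κ) * w q -
          κ * ∫ s in Ioo (0:ℝ) q.2,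
            Real.exp (-(lam * (q.2 - s))) * G (q.2 - s) * w (q.1, s)) * w q := by
    apply integral_congr_ae
    filter_upwards [measure_eq_zero_iff_ae_notMem.mp hBad, ae_restrict_mem hQm] with q hqB hqQ
    have hq1 : v q = w q := by
      by_contra h
      exact hqB (Or.inl h)
    have hq2 : q.1 ∉ Sx := by
      intro h
      exact hqB (Or.inr ⟨h, trivial⟩)
    have hPx : ∀ᵐ s ∂μT, v (q.1, s) = w (q.1, s) := by
      by_contra h
      exact hq2 (hSx_sub h)
    have htQ : q.2 ∈ Ioo (0:ℝ) T := hqQ.2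
    -- inner integral equality
    have hinner : (∫ s in Ioo (0:ℝ) q.2,
          Real.exp (-(lam * (q.2 - s))) * g (q.2 - s) * v (q.1, s))
        = ∫ s in Ioo (0:ℝ) q.2,
          Real.exp (-(lam * (q.2 - s))) * G (q.2 - s) * w (q.1, s) := by
      have hsub : Ioo (0:ℝ) q.2 ⊆ Ioo (0:ℝ) T := Ioo_subset_Ioo le_rfl htQ.2.le
      have hvs : ∀ᵐ s ∂volume.restrict (Ioo (0:ℝ) q.2), v (q.1, s) = w (q.1, s) := by
        rw [ae_iff] at hPx ⊢
        rw [hμT, Measure.restrict_apply' measurableSet_Ioo] at hPx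
        rw [Measure.restrict_apply' measurableSet_Ioo]
        exact measure_mono_null (inter_subset_inter_right _ hsub) hPx
      have hgs : ∀ᵐ s ∂volume.restrict (Ioo (0:ℝ) q.2), g (q.2 - s) = G (q.2 - s) := by
        have hnull : volume ({σ | ¬ g σ = G σ} ∩ Ioo (0:ℝ) T) = 0 := by
          have h' : ∀ᵐ σ ∂μT, g σ = G σ := hgG
          rw [ae_iff, hμT, Measure.restrict_apply' measurableSet_Ioo] at h'
          exact h'
        have hmp : MeasurePreserving (fun s : ℝ => q.2 - s) volume volume := by
          have h1 := (measurePreserving_add_left (volume : Measure ℝ) q.2).comp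
            (Measure.measurePreserving_neg (volume : Measure ℝ))
          have h2 : (fun s : ℝ => q.2 - s) = (fun s : ℝ => q.2 + -s) :=
            funext fun s => sub_eq_add_neg _ _
          rw [h2]
          exact h1
        have hpre : volume ((fun s : ℝ => q.2 - s) ⁻¹' ({σ | ¬ g σ = G σ} ∩ Ioo (0:ℝ) T)) = 0 :=
          hmp.quasiMeasurePreserving.preimage_null hnull
        rw [ae_iff, Measure.restrict_apply' measurableSet_Ioo]
        apply measure_mono_null _ hpre
        intro s hs
        rcases hs with ⟨hs1, hs2⟩
        simp only [mem_Ioo] at hs2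
        exact mem_preimage.mpr ⟨hs1, mem_Ioo.mpr
          ⟨by linarith [hs2.2], by linarith [hs2.1, htQ.2]⟩⟩
      apply integral_congr_ae
      filter_upwards [hvs, hgs] with s h1 h2
      simp only [h1, h2]
    rw [hq1, hinner]
  rw [E1, E2]
  exact core_ineq T hT Ω hΩm hΩb ρ u₂ u₃ κ β M hρ hβ hM0 lam hlam G hGmeas hGb w hwmeas hwb
end

section
/- Let β > 0, let (g_n) be a sequence in L^∞(0,T) with ‖g_n‖_{L^∞(0,T)} ≤ β for all n and ∫_0^T g_n(τ) ψ(τ) dτ → ∫_0^T ḡ(τ) ψ(τ) dτ for every ψ ∈ L²(0,T), where ḡ ∈ L^∞(0,T); let (u_n) be a sequence in L^∞(Q) with ‖u_n − ū‖_{L^∞(Q)} → 0 for some ū ∈ L^∞(Q). Then K(g_n)u_n converges weakly to K(ḡ)ū in L²(Q); that is, for every φ ∈ L²(Q), ∫∫_Q φ(x,t) (K(g_n)u_n)(x,t) dx dt → ∫∫_Q φ(x,t) (K(ḡ)ū)(x,t) dx dt as n → ∞. -/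
open MeasureTheory Set Filter

section StmtNineAux

lemma stmt9_finIoo (a b : ℝ) : IsFiniteMeasure (volume.restrict (Ioo a b)) :=
  ⟨by rw [Measure.restrict_apply_univ]; exact measure_Ioo_lt_top⟩

lemma stmt9_ae_fst {α β : Type*} [MeasurableSpace α] [MeasurableSpace β] (μ : Measure α)
    (ν : Measure β) [SFinite ν] {p : α → Prop} (h : ∀ᵐ x ∂μ, p x) :
    ∀ᵐ z ∂μ.prod ν, p z.1 := by
  rw [ae_iff] at h ⊢
  have hs : {z : α × β | ¬ p z.1} = {x | ¬ p x} ×ˢ univ := by ext z; simp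
  rw [hs, Measure.prod_prod, h, zero_mul]

lemma stmt9_ae_abs_le_of_eLpNorm_top {α : Type*} [MeasurableSpace α] {μ : Measure α}
    {f : α → ℝ} (h : eLpNorm f ⊤ μ ≠ ⊤) :
    ∀ᵐ x ∂μ, |f x| ≤ (eLpNorm f ⊤ μ).toReal := by
  filter_upwards [ae_le_eLpNormEssSup (f := f) (μ := μ)] with x hx
  rw [eLpNorm_exponent_top] at h ⊢
  have := ENNReal.toReal_mono h hx
  simpa [Real.norm_eq_abs] using this

lemma stmt9_rep {α : Type*} [MeasurableSpace α] {μ : Measure α} {f : α → ℝ} {b : ℝ}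
    (hb : 0 ≤ b) (hf : AEStronglyMeasurable f μ) (hbd : ∀ᵐ x ∂μ, |f x| ≤ b) :
    ∃ F : α → ℝ, Measurable F ∧ (∀ x, |F x| ≤ b) ∧ f =ᵐ[μ] F := by
  refine ⟨fun x => max (-b) (min b (hf.mk f x)), ?_, ?_, ?_⟩
  · exact measurable_const.max (measurable_const.min hf.measurable_mk)
  · intro x
    rw [abs_le]
    exact ⟨le_max_left _ _, max_le (by linarith) (min_le_left _ _)⟩
  · filter_upwards [hf.ae_eq_mk, hbd] with x h1 h2
    rw [abs_le] at h2
    rw [← h1, min_eq_right h2.2, max_eq_right h2.1]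

lemma stmt9_key_transfer {N : ℕ} (T : ℝ) (Ω : Set (Fin N → ℝ)) (hΩm : MeasurableSet Ω)
    (S : Set ((Fin N → ℝ) × ℝ))
    (hS : (volume.restrict (Ω ×ˢ Ioo (0:ℝ) T)) S = 0) :
    ∀ᵐ q ∂(volume.restrict (Ω ×ˢ Ioo (0:ℝ) T)),
      ∀ᵐ τ ∂(volume.restrict (Ioo (0:ℝ) q.2)), (q.1, q.2 - τ) ∉ S := by
  set Q : Set ((Fin N → ℝ) × ℝ) := Ω ×ˢ Ioo (0:ℝ) T with hQ
  have hQm : MeasurableSet Q := hΩm.prod measurableSet_Ioo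
  set S' : Set ((Fin N → ℝ) × ℝ) :=
    toMeasurable (volume.restrict Q) S ∩ Q with hS'
  have hS'm : MeasurableSet S' :=
    (measurableSet_toMeasurable _ _).inter hQm
  have hS'0 : volume S' = 0 := by
    have h1 : (volume.restrict Q) (toMeasurable (volume.restrict Q) S) = 0 := by
      rw [measure_toMeasurable]; exact hS
    rwa [Measure.restrict_apply (measurableSet_toMeasurable _ _)] at h1
  have hslice : ∀ᵐ x ∂(volume : Measure (Fin N → ℝ)),
      volume (Prod.mk x ⁻¹' S') = 0 := by
    have := (Measure.measure_prod_null (μ := (volume : Measure (Fin N → ℝ)))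
      (ν := (volume : Measure ℝ)) hS'm).mp (by rw [← Measure.volume_eq_prod]; exact hS'0)
    filter_upwards [this] with x hx using hx
  have hae : ∀ᵐ q ∂(volume.restrict Q), volume (Prod.mk q.1 ⁻¹' S') = 0 := by
    rw [ae_iff] at hslice ⊢
    have hsub : {q : (Fin N → ℝ) × ℝ | ¬ volume (Prod.mk q.1 ⁻¹' S') = 0}
        = {x | ¬ volume (Prod.mk x ⁻¹' S') = 0} ×ˢ univ := by ext z; simp
    refine le_antisymm ?_ zero_le
    calc (volume.restrict Q) {q : (Fin N → ℝ) × ℝ | ¬ volume (Prod.mk q.1 ⁻¹' S') = 0}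
        ≤ volume ({x | ¬ volume (Prod.mk x ⁻¹' S') = 0} ×ˢ (univ : Set ℝ)) := by
          rw [← hsub]; exact Measure.restrict_le_self _
      _ = 0 := by
          rw [Measure.volume_eq_prod, Measure.prod_prod, hslice, zero_mul]
  filter_upwards [hae, ae_restrict_mem hQm] with q hq hqQ
  have hpre : volume ((fun τ : ℝ => q.2 - τ) ⁻¹' (Prod.mk q.1 ⁻¹' S')) = 0 := by
    rw [(Measure.measurePreserving_sub_left volume q.2).measure_preimage
      (measurable_prodMk_left hS'm).nullMeasurableSet]
    exact hq
  have h2 : ∀ᵐ τ ∂(volume : Measure ℝ), (q.1, q.2 - τ) ∉ S' := by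
    rw [ae_iff]
    simpa [Set.preimage] using hpre
  filter_upwards [ae_restrict_of_ae h2, ae_restrict_mem measurableSet_Ioo] with τ hτ hτmem hmemS
  apply hτ
  refine ⟨subset_toMeasurable _ _ hmemS, ?_⟩
  rcases hqQ with ⟨hx, ht⟩
  obtain ⟨hτ0, hτq⟩ := hτmem
  obtain ⟨hq0, hqT⟩ := ht
  have h1 : (0:ℝ) < q.2 - τ := by linarith
  have h2' : q.2 - τ < T := by linarith
  exact ⟨hx, h1, h2'⟩

lemma stmt9_key_transfer' {N : ℕ} (T : ℝ) (Ω : Set (Fin N → ℝ)) (hΩm : MeasurableSet Ω)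
    {P : (Fin N → ℝ) × ℝ → Prop}
    (hP : ∀ᵐ p ∂(volume.restrict (Ω ×ˢ Ioo (0:ℝ) T)), P p) :
    ∀ᵐ q ∂(volume.restrict (Ω ×ˢ Ioo (0:ℝ) T)),
      ∀ᵐ τ ∂(volume.restrict (Ioo (0:ℝ) q.2)), P (q.1, q.2 - τ) := by
  have h := stmt9_key_transfer T Ω hΩm {p | ¬ P p} (by rw [ae_iff] at hP; exact hP)
  filter_upwards [h] with q hq
  filter_upwards [hq] with τ hτ
  exact not_not.mp hτ

lemma stmt9_inner_congr {N : ℕ} (T : ℝ) (Ω : Set (Fin N → ℝ)) (hΩm : MeasurableSet Ω)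
    {c c' : ℝ → ℝ} (hc : c =ᵐ[volume.restrict (Ioo (0:ℝ) T)] c')
    {v v' : (Fin N → ℝ) × ℝ → ℝ}
    (hv : v =ᵐ[volume.restrict (Ω ×ˢ Ioo (0:ℝ) T)] v') :
    (fun q : (Fin N → ℝ) × ℝ => ∫ τ in Ioo (0:ℝ) q.2, c τ * v (q.1, q.2 - τ))
      =ᵐ[volume.restrict (Ω ×ˢ Ioo (0:ℝ) T)]
    (fun q => ∫ τ in Ioo (0:ℝ) q.2, c' τ * v' (q.1, q.2 - τ)) := by
  have h1 := stmt9_key_transfer' T Ω hΩm hv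
  filter_upwards [h1, ae_restrict_mem (hΩm.prod measurableSet_Ioo)] with q hq hqQ
  have hsub : Ioo (0:ℝ) q.2 ⊆ Ioo (0:ℝ) T :=
    Ioo_subset_Ioo le_rfl hqQ.2.2.le
  have hc' : ∀ᵐ τ ∂(volume.restrict (Ioo (0:ℝ) q.2)), c τ = c' τ :=
    ae_restrict_of_ae_restrict_of_subset hsub hc
  refine integral_congr_ae ?_
  filter_upwards [hq, hc'] with τ h1 h2
  rw [h1, h2]

variable {N : ℕ}

lemma stmt9_inner_eq (C : ℝ → ℝ) (V : (Fin N → ℝ) × ℝ → ℝ) (q : (Fin N → ℝ) × ℝ) :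
    (∫ τ in Ioo (0:ℝ) q.2, C τ * V (q.1, q.2 - τ))
      = ∫ τ : ℝ, (if 0 < τ ∧ τ < q.2 then C τ * V (q.1, q.2 - τ) else 0) := by
  rw [← integral_indicator measurableSet_Ioo]
  congr 1
  ext τ
  simp [Set.indicator_apply, mem_Ioo]

lemma stmt9_w_meas {C : ℝ → ℝ} (hC : Measurable C) {V : (Fin N → ℝ) × ℝ → ℝ}
    (hV : Measurable V) :
    Measurable (fun z : ((Fin N → ℝ) × ℝ) × ℝ =>
      (if 0 < z.2 ∧ z.2 < z.1.2 then C z.2 * V (z.1.1, z.1.2 - z.2) else 0)) := by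
  have hs : MeasurableSet {z : ((Fin N → ℝ) × ℝ) × ℝ | 0 < z.2 ∧ z.2 < z.1.2} :=
    (measurableSet_lt measurable_const measurable_snd).inter
      (measurableSet_lt measurable_snd (measurable_fst.snd))
  refine Measurable.ite hs ?_ measurable_const
  exact (hC.comp measurable_snd).mul
    (hV.comp ((measurable_fst.fst).prodMk ((measurable_fst.snd).sub measurable_snd)))

lemma stmt9_inner_meas {C : ℝ → ℝ} (hC : Measurable C) {V : (Fin N → ℝ) × ℝ → ℝ}
    (hV : Measurable V) :
    StronglyMeasurable (fun q : (Fin N → ℝ) × ℝ =>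
      ∫ τ in Ioo (0:ℝ) q.2, C τ * V (q.1, q.2 - τ)) := by
  have h : (fun q : (Fin N → ℝ) × ℝ => ∫ τ in Ioo (0:ℝ) q.2, C τ * V (q.1, q.2 - τ))
      = fun q => ∫ τ : ℝ, (fun z : ((Fin N → ℝ) × ℝ) × ℝ =>
          (if 0 < z.2 ∧ z.2 < z.1.2 then C z.2 * V (z.1.1, z.1.2 - z.2) else 0)) (q, τ) := by
    funext q; exact stmt9_inner_eq C V q
  rw [h]
  exact (stmt9_w_meas hC hV).stronglyMeasurable.integral_prod_right'

lemma stmt9_inner_bound {C : ℝ → ℝ} {b : ℝ} (hCb : ∀ τ, |C τ| ≤ b)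
    {V : (Fin N → ℝ) × ℝ → ℝ} {m : ℝ} (hVb : ∀ p, |V p| ≤ m)
    {T : ℝ} (hT : 0 ≤ T) (q : (Fin N → ℝ) × ℝ) (hq : q.2 ≤ T) :
    |∫ τ in Ioo (0:ℝ) q.2, C τ * V (q.1, q.2 - τ)| ≤ b * m * T := by
  have hb : 0 ≤ b := le_trans (abs_nonneg _) (hCb 0)
  have hm : 0 ≤ m := le_trans (abs_nonneg _) (hVb (0, 0))
  haveI : IsFiniteMeasure (volume.restrict (Ioo (0:ℝ) q.2)) := stmt9_finIoo 0 q.2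
  have h := norm_integral_le_of_norm_le_const (μ := volume.restrict (Ioo (0:ℝ) q.2))
    (f := fun τ => C τ * V (q.1, q.2 - τ)) (C := b * m)
    (Filter.Eventually.of_forall (fun τ => by
      rw [Real.norm_eq_abs, abs_mul]
      exact mul_le_mul (hCb τ) (hVb _) (abs_nonneg _) hb))
  rw [Real.norm_eq_abs] at h
  refine le_trans h ?_
  rw [measureReal_def, Measure.restrict_apply_univ, Real.volume_Ioo]
  rw [ENNReal.toReal_ofReal']
  have hmax : max (q.2 - 0) 0 ≤ T := by
    rcases le_or_gt q.2 0 with h'|h'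
    · simpa using ⟨by linarith, hT⟩
    · simpa using ⟨by linarith, hT⟩
  exact mul_le_mul_of_nonneg_left hmax (mul_nonneg hb hm)

lemma stmt9_fubini_step (T : ℝ) (hT : 0 < T) (Ω : Set (Fin N → ℝ))
    (hΩm : MeasurableSet Ω) (hΩb : Bornology.IsBounded Ω)
    {C : ℝ → ℝ} (hC : Measurable C) {b : ℝ} (hCb : ∀ τ, |C τ| ≤ b)
    {V : (Fin N → ℝ) × ℝ → ℝ} (hV : Measurable V) {m : ℝ} (hVb : ∀ p, |V p| ≤ m)
    {φ : (Fin N → ℝ) × ℝ → ℝ} (hφ : MemLp φ 2 (volume.restrict (Ω ×ˢ Ioo (0:ℝ) T))) :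
    (∫ q in Ω ×ˢ Ioo (0:ℝ) T, φ q * ∫ τ in Ioo (0:ℝ) q.2, C τ * V (q.1, q.2 - τ))
      = ∫ τ in Ioo (0:ℝ) T, C τ *
          ∫ q in Ω ×ˢ Ioo (0:ℝ) T,
            (if 0 < τ ∧ τ < q.2 then φ q * V (q.1, q.2 - τ) else 0) := by
  set Q : Set ((Fin N → ℝ) × ℝ) := Ω ×ˢ Ioo (0:ℝ) T with hQdef
  have hQm : MeasurableSet Q := hΩm.prod measurableSet_Ioo
  haveI : IsFiniteMeasure (volume.restrict Q) := by
    refine ⟨?_⟩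
    rw [Measure.restrict_apply_univ]
    exact (hΩb.prod (Metric.isBounded_Ioo 0 T)).measure_lt_top
  have hb : 0 ≤ b := le_trans (abs_nonneg _) (hCb 0)
  have hm : 0 ≤ m := le_trans (abs_nonneg _) (hVb (0, 0))
  have hφint : Integrable φ (volume.restrict Q) :=
    memLp_one_iff_integrable.mp (hφ.mono_exponent (by norm_num))
  have hint : Integrable (Function.uncurry fun (q : (Fin N → ℝ) × ℝ) (τ : ℝ) =>
      φ q * (if 0 < τ ∧ τ < q.2 then C τ * V (q.1, q.2 - τ) else 0))
      ((volume.restrict Q).prod volume) := by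
    refine Integrable.mono'
      (g := fun z => |φ z.1| * ((Ioo (0:ℝ) T).indicator (fun _ => b * m) z.2)) ?_ ?_ ?_
    · exact (hφint.abs).mul_prod
        ((integrableOn_const (C := b * m) measure_Ioo_lt_top.ne enorm_ne_top).integrable_indicator
          measurableSet_Ioo)
    · exact (hφ.1.comp_fst).mul ((stmt9_w_meas hC hV).aestronglyMeasurable)
    · filter_upwards [stmt9_ae_fst (volume.restrict Q) volume (ae_restrict_mem hQm)] with z hz
      rw [Function.uncurry, Real.norm_eq_abs, abs_mul]
      refine mul_le_mul_of_nonneg_left ?_ (abs_nonneg _)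
      by_cases hc : 0 < z.2 ∧ z.2 < z.1.2
      · rw [if_pos hc,
          Set.indicator_of_mem (mem_Ioo.mpr ⟨hc.1, lt_trans hc.2 (mem_Ioo.mp hz.2).2⟩), abs_mul]
        exact mul_le_mul (hCb _) (hVb _) (abs_nonneg _) hb
      · rw [if_neg hc, abs_zero]
        exact Set.indicator_nonneg (fun _ _ => mul_nonneg hb hm) _
  have swap := integral_integral_swap hint
  have step1 : (∫ q in Q, φ q * ∫ τ in Ioo (0:ℝ) q.2, C τ * V (q.1, q.2 - τ))
      = ∫ q in Q, ∫ τ : ℝ,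
          φ q * (if 0 < τ ∧ τ < q.2 then C τ * V (q.1, q.2 - τ) else 0) := by
    refine integral_congr_ae (Eventually.of_forall fun q => ?_)
    beta_reduce
    rw [stmt9_inner_eq, ← integral_const_mul]
  have step2 : ∀ τ : ℝ, (∫ q in Q,
        φ q * (if 0 < τ ∧ τ < q.2 then C τ * V (q.1, q.2 - τ) else 0))
      = (Ioo (0:ℝ) T).indicator (fun τ => C τ *
          ∫ q in Q, (if 0 < τ ∧ τ < q.2 then φ q * V (q.1, q.2 - τ) else 0)) τ := by
    intro τ
    by_cases hτ : τ ∈ Ioo (0:ℝ) T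
    · rw [Set.indicator_of_mem hτ, ← integral_const_mul]
      refine integral_congr_ae (Eventually.of_forall fun q => ?_)
      beta_reduce
      by_cases hc : 0 < τ ∧ τ < q.2
      · rw [if_pos hc, if_pos hc]; ring
      · rw [if_neg hc, if_neg hc, mul_zero, mul_zero]
    · rw [Set.indicator_of_notMem hτ]
      have h0 : ∀ᵐ q ∂(volume.restrict Q),
          φ q * (if 0 < τ ∧ τ < q.2 then C τ * V (q.1, q.2 - τ) else 0) = 0 := by
        filter_upwards [ae_restrict_mem hQm] with q hq
        have hc : ¬ (0 < τ ∧ τ < q.2) := by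
          rintro ⟨h1, h2⟩; exact hτ ⟨h1, lt_trans h2 hq.2.2⟩
        rw [if_neg hc, mul_zero]
      rw [integral_congr_ae h0, integral_zero]
  rw [step1, swap]
  rw [integral_congr_ae (Eventually.of_forall step2)]
  exact integral_indicator measurableSet_Ioo

lemma stmt9_psi_mem (T : ℝ) (Ω : Set (Fin N → ℝ)) (hΩm : MeasurableSet Ω)
    (hΩb : Bornology.IsBounded Ω)
    {V : (Fin N → ℝ) × ℝ → ℝ} (hV : Measurable V) {m : ℝ} (hVb : ∀ p, |V p| ≤ m)
    {φ : (Fin N → ℝ) × ℝ → ℝ} (hφ : MemLp φ 2 (volume.restrict (Ω ×ˢ Ioo (0:ℝ) T))) :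
    MemLp (fun τ => ∫ q in Ω ×ˢ Ioo (0:ℝ) T,
        (if 0 < τ ∧ τ < q.2 then φ q * V (q.1, q.2 - τ) else 0)) 2
      (volume.restrict (Ioo (0:ℝ) T)) := by
  set Q : Set ((Fin N → ℝ) × ℝ) := Ω ×ˢ Ioo (0:ℝ) T with hQdef
  have hQm : MeasurableSet Q := hΩm.prod measurableSet_Ioo
  haveI : IsFiniteMeasure (volume.restrict Q) :=
    ⟨by rw [Measure.restrict_apply_univ]
        exact (hΩb.prod (Metric.isBounded_Ioo 0 T)).measure_lt_top⟩
  haveI : IsFiniteMeasure (volume.restrict (Ioo (0:ℝ) T)) := stmt9_finIoo 0 T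
  have hm : 0 ≤ m := le_trans (abs_nonneg _) (hVb (0, 0))
  have hφint : Integrable φ (volume.restrict Q) :=
    memLp_one_iff_integrable.mp (hφ.mono_exponent (by norm_num))
  have hsmeas : MeasurableSet {z : ℝ × ((Fin N → ℝ) × ℝ) | 0 < z.1 ∧ z.1 < z.2.2} :=
    (measurableSet_lt measurable_const measurable_fst).inter
      (measurableSet_lt measurable_fst (measurable_snd.snd))
  have hfm : AEStronglyMeasurable
      (fun z : ℝ × ((Fin N → ℝ) × ℝ) =>
        ({z : ℝ × ((Fin N → ℝ) × ℝ) | 0 < z.1 ∧ z.1 < z.2.2}.indicator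
          (fun z => φ z.2 * V (z.2.1, z.2.2 - z.1))) z)
      ((volume.restrict (Ioo (0:ℝ) T)).prod (volume.restrict Q)) := by
    refine AEStronglyMeasurable.indicator ?_ hsmeas
    exact (hφ.1.comp_snd).mul
      ((hV.comp ((measurable_snd.fst).prodMk
        ((measurable_snd.snd).sub measurable_fst))).aestronglyMeasurable)
  have hmeas : AEStronglyMeasurable (fun τ => ∫ q in Q,
      (if 0 < τ ∧ τ < q.2 then φ q * V (q.1, q.2 - τ) else 0))
      (volume.restrict (Ioo (0:ℝ) T)) := by
    have h := hfm.integral_prod_right'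
    refine h.congr (Eventually.of_forall fun τ => ?_)
    refine integral_congr_ae (Eventually.of_forall fun q => ?_)
    simp [Set.indicator_apply]
  refine MemLp.of_bound hmeas (m * ∫ q in Q, |φ q|)
    (Eventually.of_forall fun τ => ?_)
  have hb := norm_integral_le_of_norm_le (f := fun q =>
      (if 0 < τ ∧ τ < q.2 then φ q * V (q.1, q.2 - τ) else 0))
      (hφint.abs.const_mul m)
      (Eventually.of_forall fun q => ?_)
  · refine le_trans hb ?_
    rw [integral_const_mul]
  · beta_reduce
    by_cases hc : 0 < τ ∧ τ < q.2
    · rw [if_pos hc, Real.norm_eq_abs, abs_mul]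
      rw [mul_comm]
      exact mul_le_mul_of_nonneg_right (hVb _) (abs_nonneg _)
    · rw [if_neg hc, norm_zero]
      exact mul_nonneg hm (abs_nonneg _)

end StmtNineAux

/-- Let `β > 0`, let `(g_n) ⊂ L^∞(0,T)` with `‖g_n‖_∞ ≤ β` converge weakly in
`L²(0,T)` to `ḡ ∈ L^∞(0,T)`, and let `(u_n) ⊂ L^∞(Q)` converge to `ū ∈ L^∞(Q)` in the
`L^∞(Q)` norm.  Then `K(g_n)u_n ⇀ K(ḡ)ū` weakly in `L²(Q)`: for every `φ ∈ L²(Q)`,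
`∫∫_Q φ · K(g_n)u_n dxdt → ∫∫_Q φ · K(ḡ)ū dxdt`, where
`(K(g)u)(x,t) = ∫_0^t g(τ) u(x,t-τ) dτ`. -/
theorem stmt_9 {N : ℕ} (hN : 1 ≤ N) (T : ℝ) (hT : 0 < T)
    (Ω : Set (Fin N → ℝ)) (hΩm : MeasurableSet Ω) (hΩb : Bornology.IsBounded Ω)
    (β : ℝ) (hβ : 0 < β)
    (g : ℕ → ℝ → ℝ)
    (hgmeas : ∀ n, AEStronglyMeasurable (g n) (volume.restrict (Ioo (0:ℝ) T)))
    (hgbd : ∀ n, eLpNorm (g n) ⊤ (volume.restrict (Ioo (0:ℝ) T)) ≤ ENNReal.ofReal β)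
    (gbar : ℝ → ℝ) (hgbar : MemLp gbar ⊤ (volume.restrict (Ioo (0:ℝ) T)))
    (hgweak : ∀ ψ : ℝ → ℝ, MemLp ψ 2 (volume.restrict (Ioo (0:ℝ) T)) →
      Tendsto (fun n => ∫ τ in Ioo (0:ℝ) T, g n τ * ψ τ) atTop
        (nhds (∫ τ in Ioo (0:ℝ) T, gbar τ * ψ τ)))
    (u : ℕ → (Fin N → ℝ) × ℝ → ℝ)
    (hu : ∀ n, MemLp (u n) ⊤ (volume.restrict (Ω ×ˢ Ioo (0:ℝ) T)))
    (ubar : (Fin N → ℝ) × ℝ → ℝ)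
    (hubar : MemLp ubar ⊤ (volume.restrict (Ω ×ˢ Ioo (0:ℝ) T)))
    (huconv : Tendsto (fun n => eLpNorm (u n - ubar) ⊤ (volume.restrict (Ω ×ˢ Ioo (0:ℝ) T)))
      atTop (nhds 0)) :
    ∀ φ : (Fin N → ℝ) × ℝ → ℝ, MemLp φ 2 (volume.restrict (Ω ×ˢ Ioo (0:ℝ) T)) →
      Tendsto (fun n => ∫ q in Ω ×ˢ Ioo (0:ℝ) T,
          φ q * ∫ τ in Ioo (0:ℝ) q.2, g n τ * u n (q.1, q.2 - τ)) atTop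
        (nhds (∫ q in Ω ×ˢ Ioo (0:ℝ) T,
          φ q * ∫ τ in Ioo (0:ℝ) q.2, gbar τ * ubar (q.1, q.2 - τ))) := by
  intro φ hφ
  have hQm : MeasurableSet (Ω ×ˢ Ioo (0:ℝ) T) := hΩm.prod measurableSet_Ioo
  haveI : IsFiniteMeasure (volume.restrict (Ω ×ˢ Ioo (0:ℝ) T)) :=
    ⟨by rw [Measure.restrict_apply_univ]
        exact (hΩb.prod (Metric.isBounded_Ioo 0 T)).measure_lt_top⟩
  have hφint : Integrable φ (volume.restrict (Ω ×ˢ Ioo (0:ℝ) T)) :=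
    memLp_one_iff_integrable.mp (hφ.mono_exponent (by norm_num))
  -- ae bounds for g n
  have hgb : ∀ n, ∀ᵐ τ ∂(volume.restrict (Ioo (0:ℝ) T)), |g n τ| ≤ β := by
    intro n
    filter_upwards [ae_le_eLpNormEssSup (f := g n) (μ := volume.restrict (Ioo (0:ℝ) T))]
      with τ hτ
    have h2 : (‖g n τ‖₊ : ENNReal) ≤ ENNReal.ofReal β :=
      le_trans hτ (by rw [← eLpNorm_exponent_top]; exact hgbd n)
    have h3 := ENNReal.toReal_mono ENNReal.ofReal_ne_top h2
    rwa [ENNReal.toReal_ofReal hβ.le, ENNReal.coe_toReal, coe_nnnorm,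
      Real.norm_eq_abs] at h3
  -- measurable representatives
  choose G hGmeas hGbd hGae using fun n => stmt9_rep hβ.le (hgmeas n) (hgb n)
  obtain ⟨Gb, hGbmeas, hGbbd, hGbae⟩ :=
    stmt9_rep ENNReal.toReal_nonneg hgbar.1 (stmt9_ae_abs_le_of_eLpNorm_top hgbar.2.ne)
  choose U hUmeas hUbd hUae using fun n =>
    stmt9_rep ENNReal.toReal_nonneg (hu n).1 (stmt9_ae_abs_le_of_eLpNorm_top (hu n).2.ne)
  obtain ⟨Ub, hUbmeas, hUbbd, hUbae⟩ :=
    stmt9_rep ENNReal.toReal_nonneg hubar.1 (stmt9_ae_abs_le_of_eLpNorm_top hubar.2.ne)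
  set Mb : ℝ := (eLpNorm ubar ⊤ (volume.restrict (Ω ×ˢ Ioo (0:ℝ) T))).toReal with hMb
  -- the ε sequence
  set ε : ℕ → ℝ :=
    fun n => (eLpNorm (u n - ubar) ⊤ (volume.restrict (Ω ×ˢ Ioo (0:ℝ) T))).toReal with hε
  have hεconv : Tendsto ε atTop (nhds 0) := by
    have h := (ENNReal.tendsto_toReal (a := 0) (by simp)).comp huconv
    simpa [hε, Function.comp_def] using h
  have hε0 : ∀ n, 0 ≤ ε n := fun n => ENNReal.toReal_nonneg
  have hdiff : ∀ n, ∀ᵐ p ∂(volume.restrict (Ω ×ˢ Ioo (0:ℝ) T)), |U n p - Ub p| ≤ ε n := by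
    intro n
    filter_upwards [hUae n, hUbae,
      stmt9_ae_abs_le_of_eLpNorm_top ((hu n).sub hubar).2.ne] with p h1 h2 h3
    rw [← h1, ← h2]
    simpa [Pi.sub_apply, hε] using h3
  -- Ψ function
  set Ψ : ℝ → ℝ := fun τ => ∫ q in Ω ×ˢ Ioo (0:ℝ) T,
    (if 0 < τ ∧ τ < q.2 then φ q * Ub (q.1, q.2 - τ) else 0) with hΨdef
  have hΨ : MemLp Ψ 2 (volume.restrict (Ioo (0:ℝ) T)) :=
    stmt9_psi_mem T Ω hΩm hΩb hUbmeas hUbbd hφ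
  -- target rewriting
  have h_target_eq : ∀ n, (∫ q in Ω ×ˢ Ioo (0:ℝ) T,
      φ q * ∫ τ in Ioo (0:ℝ) q.2, g n τ * u n (q.1, q.2 - τ))
      = ∫ q in Ω ×ˢ Ioo (0:ℝ) T,
          φ q * ∫ τ in Ioo (0:ℝ) q.2, G n τ * U n (q.1, q.2 - τ) := by
    intro n
    refine integral_congr_ae ?_
    filter_upwards [stmt9_inner_congr T Ω hΩm (hGae n) (hUae n)] with q hq
    rw [hq]
  have h_B_eq : ∀ n, (∫ q in Ω ×ˢ Ioo (0:ℝ) T,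
      φ q * ∫ τ in Ioo (0:ℝ) q.2, G n τ * Ub (q.1, q.2 - τ))
      = ∫ τ in Ioo (0:ℝ) T, g n τ * Ψ τ := by
    intro n
    rw [stmt9_fubini_step T hT Ω hΩm hΩb (hGmeas n) (hGbd n) hUbmeas hUbbd hφ]
    refine integral_congr_ae ?_
    filter_upwards [hGae n] with τ h
    rw [h]
  have h_RHS_eq : (∫ q in Ω ×ˢ Ioo (0:ℝ) T,
      φ q * ∫ τ in Ioo (0:ℝ) q.2, gbar τ * ubar (q.1, q.2 - τ))
      = ∫ τ in Ioo (0:ℝ) T, gbar τ * Ψ τ := by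
    have h1 : (∫ q in Ω ×ˢ Ioo (0:ℝ) T,
        φ q * ∫ τ in Ioo (0:ℝ) q.2, gbar τ * ubar (q.1, q.2 - τ))
        = ∫ q in Ω ×ˢ Ioo (0:ℝ) T,
            φ q * ∫ τ in Ioo (0:ℝ) q.2, Gb τ * Ub (q.1, q.2 - τ) := by
      refine integral_congr_ae ?_
      filter_upwards [stmt9_inner_congr T Ω hΩm hGbae hUbae] with q hq
      rw [hq]
    rw [h1, stmt9_fubini_step T hT Ω hΩm hΩb hGbmeas hGbbd hUbmeas hUbbd hφ]
    refine integral_congr_ae ?_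
    filter_upwards [hGbae] with τ h
    rw [h]
  -- weak convergence part
  have hBtend : Tendsto (fun n => ∫ q in Ω ×ˢ Ioo (0:ℝ) T,
      φ q * ∫ τ in Ioo (0:ℝ) q.2, G n τ * Ub (q.1, q.2 - τ)) atTop
      (nhds (∫ q in Ω ×ˢ Ioo (0:ℝ) T,
        φ q * ∫ τ in Ioo (0:ℝ) q.2, gbar τ * ubar (q.1, q.2 - τ))) := by
    rw [h_RHS_eq]
    have h := hgweak Ψ hΨ
    refine Tendsto.congr (fun n => (h_B_eq n).symm) h
  -- error estimate
  have hE : Tendsto (fun n => (∫ q in Ω ×ˢ Ioo (0:ℝ) T,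
      φ q * ∫ τ in Ioo (0:ℝ) q.2, G n τ * U n (q.1, q.2 - τ))
      - ∫ q in Ω ×ˢ Ioo (0:ℝ) T,
          φ q * ∫ τ in Ioo (0:ℝ) q.2, G n τ * Ub (q.1, q.2 - τ)) atTop (nhds 0) := by
    refine squeeze_zero_norm
      (a := fun n => (∫ q in Ω ×ˢ Ioo (0:ℝ) T, |φ q|) * (β * ε n * T)) (fun n => ?_) ?_
    · -- per-n bound
      set Mn : ℝ := (eLpNorm (u n) ⊤ (volume.restrict (Ω ×ˢ Ioo (0:ℝ) T))).toReal with hMn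
      -- integrability of both products
      have hφAint : Integrable (fun q => φ q *
          ∫ τ in Ioo (0:ℝ) q.2, G n τ * U n (q.1, q.2 - τ))
          (volume.restrict (Ω ×ˢ Ioo (0:ℝ) T)) := by
        refine Integrable.mono' (g := fun q => |φ q| * (β * Mn * T))
          (hφint.abs.mul_const _)
          (hφ.1.mul (stmt9_inner_meas (hGmeas n) (hUmeas n)).aestronglyMeasurable) ?_
        filter_upwards [ae_restrict_mem hQm] with q hq
        rw [Real.norm_eq_abs, abs_mul]
        exact mul_le_mul_of_nonneg_left
          (stmt9_inner_bound (hGbd n) (hUbd n) hT.le q hq.2.2.le) (abs_nonneg _)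
      have hφBint : Integrable (fun q => φ q *
          ∫ τ in Ioo (0:ℝ) q.2, G n τ * Ub (q.1, q.2 - τ))
          (volume.restrict (Ω ×ˢ Ioo (0:ℝ) T)) := by
        refine Integrable.mono' (g := fun q => |φ q| * (β * Mb * T))
          (hφint.abs.mul_const _)
          (hφ.1.mul (stmt9_inner_meas (hGmeas n) hUbmeas).aestronglyMeasurable) ?_
        filter_upwards [ae_restrict_mem hQm] with q hq
        rw [Real.norm_eq_abs, abs_mul]
        exact mul_le_mul_of_nonneg_left
          (stmt9_inner_bound (hGbd n) hUbbd hT.le q hq.2.2.le) (abs_nonneg _)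
      rw [← integral_sub hφAint hφBint]
      -- a.e. bound on the difference of inner integrals
      have hab : ∀ᵐ q ∂(volume.restrict (Ω ×ˢ Ioo (0:ℝ) T)),
          |(∫ τ in Ioo (0:ℝ) q.2, G n τ * U n (q.1, q.2 - τ))
            - ∫ τ in Ioo (0:ℝ) q.2, G n τ * Ub (q.1, q.2 - τ)| ≤ β * ε n * T := by
        filter_upwards [stmt9_key_transfer' T Ω hΩm (hdiff n), ae_restrict_mem hQm]
          with q hq hqQ
        haveI : IsFiniteMeasure (volume.restrict (Ioo (0:ℝ) q.2)) := stmt9_finIoo 0 q.2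
        have hfint : Integrable (fun τ => G n τ * U n (q.1, q.2 - τ))
            (volume.restrict (Ioo (0:ℝ) q.2)) := by
          refine Integrable.mono' (integrable_const (β * Mn))
            (((hGmeas n).mul ((hUmeas n).comp
              (measurable_const.prodMk (measurable_const.sub measurable_id)))).aestronglyMeasurable)
            (Eventually.of_forall fun τ => ?_)
          rw [Real.norm_eq_abs, abs_mul]
          exact mul_le_mul (hGbd n τ) (hUbd n _) (abs_nonneg _) hβ.le
        have hgint : Integrable (fun τ => G n τ * Ub (q.1, q.2 - τ))
            (volume.restrict (Ioo (0:ℝ) q.2)) := by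
          refine Integrable.mono' (integrable_const (β * Mb))
            (((hGmeas n).mul (hUbmeas.comp
              (measurable_const.prodMk (measurable_const.sub measurable_id)))).aestronglyMeasurable)
            (Eventually.of_forall fun τ => ?_)
          rw [Real.norm_eq_abs, abs_mul]
          exact mul_le_mul (hGbd n τ) (hUbbd _) (abs_nonneg _) hβ.le
        rw [← integral_sub hfint hgint]
        have haebd : ∀ᵐ τ ∂(volume.restrict (Ioo (0:ℝ) q.2)),
            ‖G n τ * U n (q.1, q.2 - τ) - G n τ * Ub (q.1, q.2 - τ)‖ ≤ β * ε n := by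
          filter_upwards [hq] with τ hτ
          rw [← mul_sub, Real.norm_eq_abs, abs_mul]
          exact mul_le_mul (hGbd n τ) hτ (abs_nonneg _) hβ.le
        have hbd := norm_integral_le_of_norm_le_const
          (μ := volume.restrict (Ioo (0:ℝ) q.2))
          (f := fun τ => G n τ * U n (q.1, q.2 - τ) - G n τ * Ub (q.1, q.2 - τ))
          (C := β * ε n) haebd
        rw [Real.norm_eq_abs] at hbd
        refine le_trans hbd ?_
        rw [measureReal_def, Measure.restrict_apply_univ, Real.volume_Ioo, ENNReal.toReal_ofReal']
        have hmax : max (q.2 - 0) 0 ≤ T := by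
          rcases le_or_gt q.2 0 with h'|h'
          · simpa using ⟨by linarith [hqQ.2.2], hT.le⟩
          · simpa using ⟨by linarith [hqQ.2.2], hT.le⟩
        calc (β * ε n) * max (q.2 - 0) 0 ≤ (β * ε n) * T :=
              mul_le_mul_of_nonneg_left hmax (mul_nonneg hβ.le (hε0 n))
          _ = β * ε n * T := by ring
      -- conclude the per-n bound
      have haefin : ∀ᵐ q ∂(volume.restrict (Ω ×ˢ Ioo (0:ℝ) T)),
          ‖φ q * ((∫ τ in Ioo (0:ℝ) q.2, G n τ * U n (q.1, q.2 - τ))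
            - ∫ τ in Ioo (0:ℝ) q.2, G n τ * Ub (q.1, q.2 - τ))‖
            ≤ |φ q| * (β * ε n * T) := by
        filter_upwards [hab] with q hq
        rw [Real.norm_eq_abs, abs_mul]
        exact mul_le_mul_of_nonneg_left hq (abs_nonneg _)
      have hfinal := norm_integral_le_of_norm_le
        (f := fun q => φ q * ((∫ τ in Ioo (0:ℝ) q.2, G n τ * U n (q.1, q.2 - τ))
          - ∫ τ in Ioo (0:ℝ) q.2, G n τ * Ub (q.1, q.2 - τ)))
        (g := fun q => |φ q| * (β * ε n * T))
        (hφint.abs.mul_const _) haefin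
      have heq : (∫ q in Ω ×ˢ Ioo (0:ℝ) T,
            (φ q * ∫ τ in Ioo (0:ℝ) q.2, G n τ * U n (q.1, q.2 - τ))
            - φ q * ∫ τ in Ioo (0:ℝ) q.2, G n τ * Ub (q.1, q.2 - τ))
            = ∫ q in Ω ×ˢ Ioo (0:ℝ) T,
              φ q * ((∫ τ in Ioo (0:ℝ) q.2, G n τ * U n (q.1, q.2 - τ))
                - ∫ τ in Ioo (0:ℝ) q.2, G n τ * Ub (q.1, q.2 - τ)) := by
          refine integral_congr_ae (Eventually.of_forall fun q => ?_)
          beta_reduce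
          ring
      rw [heq]
      refine le_trans hfinal ?_
      rw [integral_mul_const]
    · -- the bound sequence tends to 0
      have h := hεconv.const_mul ((∫ q in Ω ×ˢ Ioo (0:ℝ) T, |φ q|) * β * T)
      rw [mul_zero] at h
      refine Tendsto.congr (fun n => ?_) h
      ring
  -- assemble
  have hsum := hE.add hBtend
  rw [zero_add] at hsum
  refine Tendsto.congr (fun n => ?_) hsum
  rw [← h_target_eq n]
  ring
end
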